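/- Let p ≥ 1, let E be an edge set on V = {0,…,p−1}, let A be an E-supported Schur stable real p×p matrix, let n ≥ 1 and w : V → ℝ. Then for every index tuple (i_1,…,i_n) ∈ V^n, the order-n steady-state cumulant tensor satisfies the trek rule: T_n(A,w)(i_1,…,i_n) = ∑_{l=0}^∞ [ ∑_{τ} w_{top(τ)} · ∏_{m=1}^n (A-weight of f_m) ], where for each l the inner sum is the finite sum over all n-equitreks τ = (f_1,…,f_n) of length l between i_1,…,i_n in (V,E), and the outer series over l converges absolutely. -/

import Mathlib

open Matrix

/-- The order-`n` steady-state cumulant tensor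
`T_n(A,w)(i₁,…,iₙ) = ∑_{l=0}^∞ ∑_{r} w_r (A^l)_{i₁ r} ⋯ (A^l)_{iₙ r}`. -/
noncomputable def steadyCumulant (p n : ℕ) (A : Matrix (Fin p) (Fin p) ℝ)
    (w : Fin p → ℝ) (i : Fin n → Fin p) : ℝ :=
  ∑' l : ℕ, ∑ r : Fin p, w r * ∏ m : Fin n, (A ^ l) (i m) r

/-- `f` is a walk of length `l` in the directed graph with edge set `E`. -/
def IsWalk {p : ℕ} (E : Finset (Fin p × Fin p)) {l : ℕ} (f : Fin (l + 1) → Fin p) : Prop :=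
  ∀ s : Fin l, (f s.castSucc, f s.succ) ∈ E

instance {p : ℕ} (E : Finset (Fin p × Fin p)) {l : ℕ} (f : Fin (l + 1) → Fin p) :
    Decidable (IsWalk E f) :=
  inferInstanceAs (Decidable (∀ s : Fin l, (f s.castSucc, f s.succ) ∈ E))

/-- The `A`-weight of a walk: the product of the entries `A_{f(s+1) f(s)}`. -/
def walkWeight {p : ℕ} (A : Matrix (Fin p) (Fin p) ℝ) {l : ℕ}
    (f : Fin (l + 1) → Fin p) : ℝ :=
  ∏ s : Fin l, A (f s.succ) (f s.castSucc)

/-- The finite sum over all `n`-equitreks of length `l` between `i₁,…,iₙ` of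
`w_{top(τ)}` times the product of the `A`-weights of the `n` walks. -/
noncomputable def equitrekSum (p n : ℕ) (hn : 1 ≤ n) (E : Finset (Fin p × Fin p))
    (A : Matrix (Fin p) (Fin p) ℝ) (w : Fin p → ℝ) (i : Fin n → Fin p) (l : ℕ) : ℝ :=
  ∑ f : Fin n → Fin (l + 1) → Fin p,
    if (∀ m : Fin n, IsWalk E (f m)) ∧ (∀ m m' : Fin n, f m 0 = f m' 0) ∧
        (∀ m : Fin n, f m (Fin.last l) = i m)
    then w (f ⟨0, hn⟩ 0) * ∏ m : Fin n, walkWeight A (f m)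
    else 0

/-! ### Auxiliary lemmas -/

section Aux

open Filter
open scoped ENNReal NNReal

lemma walkWeight_snoc {p : ℕ} (A : Matrix (Fin p) (Fin p) ℝ) {l : ℕ}
    (g : Fin (l + 1) → Fin p) (j : Fin p) :
    walkWeight A (Fin.snoc g j) = walkWeight A g * A j (g (Fin.last l)) := by
  unfold walkWeight
  rw [Fin.prod_univ_castSucc]
  congr 1
  · refine Finset.prod_congr rfl fun s _ => ?_
    rw [Fin.succ_castSucc, Fin.snoc_castSucc, Fin.snoc_castSucc]
  · rw [Fin.succ_last, Fin.snoc_last, Fin.snoc_castSucc]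

lemma walk_sum {p : ℕ} (A : Matrix (Fin p) (Fin p) ℝ) :
    ∀ (l : ℕ) (r v : Fin p),
      (∑ f : Fin (l + 1) → Fin p,
        if f 0 = r ∧ f (Fin.last l) = v then walkWeight A f else 0) = (A ^ l) v r := by
  intro l
  induction l with
  | zero =>
    intro r v
    rw [← (Equiv.funUnique (Fin 1) (Fin p)).symm.sum_comp]
    simp [walkWeight, ite_and, Finset.sum_ite_eq', Matrix.one_apply, eq_comm]
  | succ l ih =>
    intro r v
    rw [← (Fin.snocEquiv (fun _ : Fin (l + 2) => Fin p)).sum_comp, Fintype.sum_prod_type]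
    have h0 : ∀ (j : Fin p) (g : Fin (l + 1) → Fin p),
        (Fin.snoc g j : Fin (l + 2) → Fin p) 0 = g 0 := fun j g => by
      have : (0 : Fin (l + 2)) = Fin.castSucc 0 := rfl
      rw [this, Fin.snoc_castSucc]
    simp only [Fin.snocEquiv, Equiv.coe_fn_mk, walkWeight_snoc, Fin.snoc_last, h0]
    rw [Finset.sum_comm]
    have L : ∀ g : Fin (l + 1) → Fin p,
        (∑ j : Fin p, if g 0 = r ∧ j = v then walkWeight A g * A j (g (Fin.last l)) else 0)
          = if g 0 = r then walkWeight A g * A v (g (Fin.last l)) else 0 := by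
      intro g
      by_cases hg : g 0 = r <;> simp [hg, Finset.sum_ite_eq']
    rw [Finset.sum_congr rfl fun g _ => L g]
    rw [pow_succ', Matrix.mul_apply]
    have R : ∀ k : Fin p, A v k * (A ^ l) k r
        = ∑ g : Fin (l + 1) → Fin p,
            if g 0 = r ∧ g (Fin.last l) = k then A v k * walkWeight A g else 0 := by
      intro k
      rw [← ih r k, Finset.mul_sum]
      exact Finset.sum_congr rfl fun g _ => by split_ifs <;> simp
    rw [Finset.sum_congr rfl fun k _ => R k, Finset.sum_comm]
    refine Finset.sum_congr rfl fun g _ => ?_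
    by_cases hg : g 0 = r <;> simp [hg, Finset.sum_ite_eq, mul_comm]

lemma equitrek_eq (p n : ℕ) (hn : 1 ≤ n) (E : Finset (Fin p × Fin p))
    (A : Matrix (Fin p) (Fin p) ℝ)
    (hsupp : ∀ i j : Fin p, (i, j) ∉ E → A j i = 0)
    (w : Fin p → ℝ) (i : Fin n → Fin p) (l : ℕ) :
    equitrekSum p n hn E A w i l = ∑ r : Fin p, w r * ∏ m : Fin n, (A ^ l) (i m) r := by
  classical
  have hzero : ∀ f : Fin (l + 1) → Fin p, ¬ IsWalk E f → walkWeight A f = 0 := by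
    intro f hf
    rw [IsWalk, not_forall] at hf
    obtain ⟨s, hs⟩ := hf
    exact Finset.prod_eq_zero (Finset.mem_univ s) (hsupp _ _ hs)
  have step1 : ∀ r : Fin p,
      w r * ∏ m : Fin n, (A ^ l) (i m) r
        = ∑ F : Fin n → Fin (l + 1) → Fin p,
            if (∀ m : Fin n, F m 0 = r ∧ F m (Fin.last l) = i m)
            then w r * ∏ m : Fin n, walkWeight A (F m) else 0 := by
    intro r
    have expand := Finset.prod_univ_sum (κ := fun _ : Fin n => (Fin (l + 1) → Fin p))
      (fun _ => Finset.univ)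
      (fun m g => if g 0 = r ∧ g (Fin.last l) = i m then walkWeight A g else 0)
    rw [Fintype.piFinset_univ] at expand
    have : ∏ m : Fin n, (A ^ l) (i m) r
        = ∑ F : Fin n → Fin (l + 1) → Fin p,
            ∏ m : Fin n, if F m 0 = r ∧ F m (Fin.last l) = i m then walkWeight A (F m) else 0 := by
      rw [← expand]
      exact Finset.prod_congr rfl fun m _ => (walk_sum A l r (i m)).symm
    rw [this, Finset.mul_sum]
    refine Finset.sum_congr rfl fun F _ => ?_
    by_cases hF : ∀ m : Fin n, F m 0 = r ∧ F m (Fin.last l) = i m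
    · rw [if_pos hF]
      congr 1
      exact Finset.prod_congr rfl fun m _ => if_pos (hF m)
    · rw [if_neg hF]
      obtain ⟨m, hm⟩ := not_forall.mp hF
      rw [Finset.prod_eq_zero (Finset.mem_univ m) (by rw [if_neg hm]), mul_zero]
  rw [equitrekSum, Finset.sum_congr rfl fun r _ => step1 r, Finset.sum_comm]
  refine Finset.sum_congr rfl fun F _ => ?_
  by_cases htop : ∀ m m' : Fin n, F m 0 = F m' 0
  · by_cases hend : ∀ m : Fin n, F m (Fin.last l) = i m
    · have collapse : ∀ r : Fin p,
          (if (∀ m : Fin n, F m 0 = r ∧ F m (Fin.last l) = i m)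
           then w r * ∏ m : Fin n, walkWeight A (F m) else 0)
            = if F ⟨0, hn⟩ 0 = r then w r * ∏ m : Fin n, walkWeight A (F m) else 0 := by
        intro r
        by_cases hr : F ⟨0, hn⟩ 0 = r
        · rw [if_pos hr, if_pos fun m => ⟨(htop m ⟨0, hn⟩).trans hr, hend m⟩]
        · rw [if_neg hr, if_neg fun h => hr (h ⟨0, hn⟩).1]
      rw [Finset.sum_congr rfl fun r _ => collapse r, Finset.sum_ite_eq]
      by_cases hwalk : ∀ m : Fin n, IsWalk E (F m)
      case pos => rw [if_pos ⟨hwalk, htop, hend⟩]; simp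
      case neg =>
        obtain ⟨m, hm'⟩ := not_forall.mp hwalk
        rw [if_neg (by tauto)]
        simp [Finset.prod_eq_zero (f := fun m => walkWeight A (F m)) (Finset.mem_univ m)
          (hzero _ hm')]
    · obtain ⟨m, hm⟩ := not_forall.mp hend
      rw [if_neg (by tauto)]
      refine (Finset.sum_eq_zero fun r _ => ?_).symm
      exact if_neg fun h => hm (h m).2
  · rw [if_neg (by tauto)]
    refine (Finset.sum_eq_zero fun r _ => ?_).symm
    exact if_neg fun h => htop fun m m' => ((h m).1).trans ((h m').1).symm

attribute [local instance] Matrix.linftyOpNormedRing Matrix.linftyOpNormedAlgebra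

lemma entry_le_norm {p : ℕ} (M : Matrix (Fin p) (Fin p) ℂ) (a b : Fin p) :
    ‖M a b‖ ≤ ‖M‖ := by
  have h1 : ‖M a b‖₊ ≤ ∑ j, ‖M a j‖₊ :=
    Finset.single_le_sum (f := fun j => ‖M a j‖₊) (fun j _ => zero_le) (Finset.mem_univ b)
  have h2 : (∑ j, ‖M a j‖₊) ≤ ‖M‖₊ := by
    rw [Matrix.linfty_opNNNorm_def]
    exact Finset.le_sup (f := fun i => ∑ j, ‖M i j‖₊) (Finset.mem_univ a)
  exact_mod_cast h1.trans h2

lemma geom_bound {p : ℕ} (hp : 1 ≤ p) (B : Matrix (Fin p) (Fin p) ℂ)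
    (hB : ∀ μ ∈ spectrum ℂ B, ‖μ‖ < 1) :
    ∃ r : ℝ, 0 ≤ r ∧ r < 1 ∧ ∀ᶠ l in atTop, ‖B ^ l‖ ≤ r ^ l := by
  have : Nonempty (Fin p) := ⟨⟨0, hp⟩⟩
  have hρ : spectralRadius ℂ B < 1 := by
    have := spectrum.spectralRadius_lt_of_forall_lt (a := B) (r := 1)
      (fun z hz => by simpa [← NNReal.coe_lt_coe, coe_nnnorm] using hB z hz)
    simpa using this
  obtain ⟨c, hc1, hc2⟩ := exists_between hρ
  have hct : c ≠ ⊤ := (hc2.trans_le le_top).ne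
  refine ⟨c.toReal, ENNReal.toReal_nonneg, ?_, ?_⟩
  · have := ENNReal.toReal_lt_toReal hct (by simp : (1 : ℝ≥0∞) ≠ ⊤)
    simpa using this.mpr hc2
  · have hev : ∀ᶠ l : ℕ in atTop, (‖B ^ l‖₊ : ℝ≥0∞) ^ (1 / (l : ℕ) : ℝ) < c :=
      (spectrum.pow_nnnorm_pow_one_div_tendsto_nhds_spectralRadius B).eventually_lt_const hc1
    filter_upwards [hev, eventually_ge_atTop 1] with l hl hl1
    have hl0 : (l : ℝ) ≠ 0 := by positivity
    have : ((‖B ^ l‖₊ : ℝ≥0∞) ^ (1 / (l : ℝ))) ^ (l : ℝ) ≤ c ^ (l : ℝ) :=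
      ENNReal.rpow_le_rpow hl.le (by positivity)
    rw [← ENNReal.rpow_mul, one_div_mul_cancel hl0, ENNReal.rpow_one] at this
    have h2 : (‖B ^ l‖₊ : ℝ≥0∞) ≤ c ^ l := by
      rwa [← ENNReal.rpow_natCast c l]
    have h3 := ENNReal.toReal_le_toReal (by simp) (by simp [ENNReal.pow_ne_top hct]) |>.mpr h2
    simpa [ENNReal.toReal_pow] using h3

lemma inner_summable (p n : ℕ) (hp : 1 ≤ p) (hn : 1 ≤ n)
    (A : Matrix (Fin p) (Fin p) ℝ)
    (hA : ∀ μ ∈ spectrum ℂ (A.map (algebraMap ℝ ℂ)), ‖μ‖ < 1)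
    (w : Fin p → ℝ) (i : Fin n → Fin p) :
    Summable (fun l : ℕ => |∑ r : Fin p, w r * ∏ m : Fin n, (A ^ l) (i m) r|) := by
  set B := A.map (algebraMap ℝ ℂ) with hBdef
  have hBpow : ∀ l : ℕ, B ^ l = (A ^ l).map (algebraMap ℝ ℂ) := by
    intro l
    have : B = (algebraMap ℝ ℂ).mapMatrix A := rfl
    rw [this, ← map_pow, RingHom.mapMatrix_apply]
  have hentry : ∀ (l : ℕ) (a b : Fin p), |(A ^ l) a b| ≤ ‖B ^ l‖ := by
    intro l a b
    have : |(A ^ l) a b| = ‖(B ^ l) a b‖ := by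
      rw [hBpow l, Matrix.map_apply]
      simp [Complex.norm_real]
    rw [this]
    exact entry_le_norm _ a b
  obtain ⟨r, hr0, hr1, hev⟩ := geom_bound hp B hA
  refine Summable.of_norm_bounded_eventually
    (g := fun l => (∑ ρ : Fin p, |w ρ|) * r ^ l)
    ((summable_geometric_of_lt_one hr0 hr1).mul_left _) ?_
  rw [Nat.cofinite_eq_atTop]
  filter_upwards [hev] with l hl
  have hrl0 : (0 : ℝ) ≤ r ^ l := by positivity
  have hrl1 : r ^ l ≤ 1 := pow_le_one₀ hr0 hr1.le
  have key : ∀ ρ : Fin p, |w ρ * ∏ m : Fin n, (A ^ l) (i m) ρ| ≤ |w ρ| * r ^ l := by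
    intro ρ
    rw [abs_mul]
    refine mul_le_mul_of_nonneg_left ?_ (abs_nonneg _)
    rw [Finset.abs_prod]
    calc (∏ m : Fin n, |(A ^ l) (i m) ρ|) ≤ ∏ _m : Fin n, r ^ l := by
          refine Finset.prod_le_prod (fun m _ => abs_nonneg _) fun m _ => ?_
          exact (hentry l (i m) ρ).trans hl
      _ = (r ^ l) ^ n := by rw [Finset.prod_const, Finset.card_univ, Fintype.card_fin]
      _ ≤ (r ^ l) ^ 1 := pow_le_pow_of_le_one hrl0 hrl1 hn
      _ = r ^ l := pow_one _
  calc ‖|∑ ρ : Fin p, w ρ * ∏ m : Fin n, (A ^ l) (i m) ρ|‖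
      = |∑ ρ : Fin p, w ρ * ∏ m : Fin n, (A ^ l) (i m) ρ| := by
        rw [Real.norm_eq_abs, abs_abs]
    _ ≤ ∑ ρ : Fin p, |w ρ * ∏ m : Fin n, (A ^ l) (i m) ρ| := Finset.abs_sum_le_sum_abs _ _
    _ ≤ ∑ ρ : Fin p, |w ρ| * r ^ l := Finset.sum_le_sum fun ρ _ => key ρ
    _ = (∑ ρ : Fin p, |w ρ|) * r ^ l := by rw [← Finset.sum_mul]

end Aux

/-- Trek rule: the order-`n` steady-state cumulant of an `E`-supported
Schur stable matrix is the (absolutely convergent) series over `l` of the finite sums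
over all `n`-equitreks of length `l`. -/
theorem stmt_3 (p n : ℕ) (hp : 1 ≤ p) (hn : 1 ≤ n) (E : Finset (Fin p × Fin p))
    (A : Matrix (Fin p) (Fin p) ℝ)
    (hsupp : ∀ i j : Fin p, (i, j) ∉ E → A j i = 0)
    (hA : ∀ μ ∈ spectrum ℂ (A.map (algebraMap ℝ ℂ)), ‖μ‖ < 1)
    (w : Fin p → ℝ) (i : Fin n → Fin p) :
    Summable (fun l : ℕ => |equitrekSum p n hn E A w i l|) ∧
    steadyCumulant p n A w i = ∑' l : ℕ, equitrekSum p n hn E A w i l := by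
  have heq : ∀ l : ℕ, equitrekSum p n hn E A w i l
      = ∑ r : Fin p, w r * ∏ m : Fin n, (A ^ l) (i m) r :=
    fun l => equitrek_eq p n hn E A hsupp w i l
  constructor
  · simpa only [heq] using inner_summable p n hp hn A hA w i
  · rw [steadyCumulant]
    exact tsum_congr fun l => (heq l).symm
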